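/- Let X be a partially ordered vector space and i ∈ {1,2,3}. Then the following are equivalent: (i) X is Archimedean and directed; (ii) for every net (λ_α)_{α∈A} in ℝ with λ_α →^{o_i} λ and every net (x_β)_{β∈B} in X with x_β →^{o_i} x, the net (λ_α x_β)_{(α,β)∈A×B} (componentwise order on A×B) satisfies λ_α x_β →^{o_i} λx. -/

import Mathlib

universe u v

/-- A relation making a type into a nonempty upward-directed preordered index set for nets. -/
def IsNetIndex {A : Type u} (r : A → A → Prop) : Prop :=
  Nonempty A ∧ Reflexive r ∧ Transitive r ∧ ∀ a b : A, ∃ c : A, r a c ∧ r b c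

/-- The net `f` is increasing (w.r.t. the index relation `r`) with supremum `x`, `f ↑ x`. -/
def IncrTo {P : Type v} [Preorder P] {A : Type u} (r : A → A → Prop) (f : A → P) (x : P) :
    Prop :=
  (∀ a b : A, r a b → f a ≤ f b) ∧ IsLUB (Set.range f) x

/-- The net `f` is decreasing (w.r.t. the index relation `r`) with infimum `x`, `f ↓ x`. -/
def DecrTo {P : Type v} [Preorder P] {A : Type u} (r : A → A → Prop) (f : A → P) (x : P) :
    Prop :=
  (∀ a b : A, r a b → f b ≤ f a) ∧ IsGLB (Set.range f) x

/-- o₁-convergence of the net `f` to `x`. -/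
def OConv1 {P : Type v} [Preorder P] {A : Type u} (r : A → A → Prop) (f : A → P) (x : P) :
    Prop :=
  ∃ xh xl : A → P, IncrTo r xh x ∧ DecrTo r xl x ∧ ∀ a : A, xh a ≤ f a ∧ f a ≤ xl a

/-- o₂-convergence of the net `f` to `x`. -/
def OConv2 {P : Type v} [Preorder P] {A : Type u} (r : A → A → Prop) (f : A → P) (x : P) :
    Prop :=
  ∃ (xh xl : A → P) (a₀ : A), IncrTo r xh x ∧ DecrTo r xl x ∧
    ∀ a : A, r a₀ a → xh a ≤ f a ∧ f a ≤ xl a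

/-- o₃-convergence of the net `f` to `x`. -/
def OConv3 {P : Type v} [Preorder P] {A : Type u} (r : A → A → Prop) (f : A → P) (x : P) :
    Prop :=
  ∃ (B : Type u) (C : Type u) (rB : B → B → Prop) (rC : C → C → Prop)
    (xh : B → P) (xl : C → P) (η : B × C → A),
    IsNetIndex rB ∧ IsNetIndex rC ∧ IncrTo rB xh x ∧ DecrTo rC xl x ∧
    ∀ (b : B) (c : C) (a : A), r (η (b, c)) a → xh b ≤ f a ∧ f a ≤ xl c

/-- o_i-convergence, `i ∈ {1,2,3}`. -/
def OConv (i : ℕ) {P : Type v} [Preorder P] {A : Type u} (r : A → A → Prop) (f : A → P)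
    (x : P) : Prop :=
  match i with
  | 1 => OConv1 r f x
  | 2 => OConv2 r f x
  | _ => OConv3 r f x

/-- `U` is a net catching set for `x`. -/
def NetCatching {P : Type v} [Preorder P] (U : Set P) (x : P) : Prop :=
  ∀ (A : Type v) (r : A → A → Prop), IsNetIndex r →
    ∀ xh xl : A → P, IncrTo r xh x → DecrTo r xl x →
      ∃ a : A, Set.Icc (xh a) (xl a) ⊆ U

/-- `O` is order open: a net catching set for each of its points. -/
def OrderOpen {P : Type v} [Preorder P] (O : Set P) : Prop :=
  ∀ x ∈ O, NetCatching O x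

/-- `C` is order closed: its complement is order open. -/
def OrderClosed {P : Type v} [Preorder P] (C : Set P) : Prop :=
  OrderOpen Cᶜ

/-- Convergence of the net `f` to `x` with respect to the order topology `τ_o`. -/
def TauConv {P : Type v} [Preorder P] {A : Type u} (r : A → A → Prop) (f : A → P) (x : P) :
    Prop :=
  ∀ O : Set P, OrderOpen O → x ∈ O → ∃ a₀ : A, ∀ a : A, r a₀ a → f a ∈ O

/-- `f` is o_i-continuous: it preserves o_i-convergence of nets. -/
def OCont (i : ℕ) {P Q : Type v} [Preorder P] [Preorder Q] (f : P → Q) : Prop :=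
  ∀ (A : Type v) (r : A → A → Prop), IsNetIndex r →
    ∀ (g : A → P) (x : P), OConv i r g x → OConv i r (f ∘ g) (f x)

/-- `f` is continuous w.r.t. the order topologies on `P` and `Q`. -/
def OrderContinuousMap {P Q : Type v} [Preorder P] [Preorder Q] (f : P → Q) : Prop :=
  ∀ O : Set Q, OrderOpen O → OrderOpen (f ⁻¹' O)

/-- `M` is order dense in `P`. -/
def OrderDense {P : Type v} [Preorder P] (M : Set P) : Prop :=
  ∀ x : P, IsLUB {m ∈ M | m ≤ x} x ∧ IsGLB {m ∈ M | x ≤ m} x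
set_option linter.unusedSectionVars false
section Helpers
variable {X : Type v} [AddCommGroup X] [PartialOrder X] [IsOrderedAddMonoid X] [Module ℝ X]

lemma hs_mono_right (hs : ∀ (l : ℝ) (x : X), 0 ≤ l → 0 ≤ x → 0 ≤ l • x)
    {t : ℝ} {z w : X} (ht : 0 ≤ t) (h : z ≤ w) : t • z ≤ t • w := by
  have := hs t (w - z) ht (sub_nonneg.2 h)
  rw [smul_sub] at this; exact sub_nonneg.1 this

lemma hs_mono_left (hs : ∀ (l : ℝ) (x : X), 0 ≤ l → 0 ≤ x → 0 ≤ l • x)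
    {s t : ℝ} {z : X} (h : s ≤ t) (hz : 0 ≤ z) : s • z ≤ t • z := by
  have := hs (t - s) z (by linarith) hz
  rw [sub_smul] at this; exact sub_nonneg.1 this

lemma hs_cancel (hs : ∀ (l : ℝ) (x : X), 0 ≤ l → 0 ≤ x → 0 ≤ l • x)
    {t : ℝ} (ht : 0 < t) {z w : X} (h : t • z ≤ t • w) : z ≤ w := by
  have := hs t⁻¹ (t • w - t • z) (by positivity) (sub_nonneg.2 h)
  rw [smul_sub, smul_smul, smul_smul, inv_mul_cancel₀ ht.ne', one_smul, one_smul] at this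
  exact sub_nonneg.1 this

lemma abs_bound (hs : ∀ (l : ℝ) (x : X), 0 ≤ l → 0 ≤ x → 0 ≤ l • x)
    {t e : ℝ} {h k : X} (h1 : |t| ≤ e) (h2 : -k ≤ h) (h3 : h ≤ k) :
    -(e • k) ≤ t • h ∧ t • h ≤ e • k := by
  obtain ⟨ht1, ht2⟩ := abs_le.1 h1
  have hkh : (0 : X) ≤ k + h := by
    have := sub_nonneg.2 (neg_le.1 h2); rwa [sub_neg_eq_add] at this
  have hkh' : (0 : X) ≤ k - h := sub_nonneg.2 h3
  constructor
  · have key : t • h + e • k =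
        (2⁻¹:ℝ) • ((e + t) • (k + h)) + (2⁻¹:ℝ) • ((e - t) • (k - h)) := by module
    have n1 : (0:X) ≤ (2⁻¹:ℝ) • ((e + t) • (k + h)) :=
      hs _ _ (by norm_num) (hs _ _ (by linarith) hkh)
    have n2 : (0:X) ≤ (2⁻¹:ℝ) • ((e - t) • (k - h)) :=
      hs _ _ (by norm_num) (hs _ _ (by linarith) hkh')
    have : (0:X) ≤ t • h + e • k := key ▸ add_nonneg n1 n2
    exact sub_nonneg.1 (by rwa [sub_neg_eq_add])
  · have key : e • k - t • h =
        (2⁻¹:ℝ) • ((e - t) • (k + h)) + (2⁻¹:ℝ) • ((e + t) • (k - h)) := by module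
    have n1 : (0:X) ≤ (2⁻¹:ℝ) • ((e - t) • (k + h)) :=
      hs _ _ (by norm_num) (hs _ _ (by linarith) hkh)
    have n2 : (0:X) ≤ (2⁻¹:ℝ) • ((e + t) • (k - h)) :=
      hs _ _ (by norm_num) (hs _ _ (by linarith) hkh')
    have : (0:X) ≤ e • k - t • h := key ▸ add_nonneg n1 n2
    exact sub_nonneg.1 this
end Helpers
section NetHelpers
universe w
variable {P : Type v} [Preorder P]

lemma netindex_prod {A : Type u} {B : Type w} {rA : A → A → Prop} {rB : B → B → Prop}
    (hA : IsNetIndex rA) (hB : IsNetIndex rB) :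
    IsNetIndex (fun p q : A × B => rA p.1 q.1 ∧ rB p.2 q.2) := by
  obtain ⟨⟨a⟩, hra, hta, hda⟩ := hA
  obtain ⟨⟨b⟩, hrb, htb, hdb⟩ := hB
  refine ⟨⟨(a, b)⟩, fun p => ⟨hra _, hrb _⟩,
    fun p q s hpq hqs => ⟨hta hpq.1 hqs.1, htb hpq.2 hqs.2⟩, fun p q => ?_⟩
  obtain ⟨c, hc1, hc2⟩ := hda p.1 q.1
  obtain ⟨d, hd1, hd2⟩ := hdb p.2 q.2
  exact ⟨(c, d), ⟨hc1, hd1⟩, ⟨hc2, hd2⟩⟩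

lemma oconv1_to (i : ℕ) (hi : i ∈ ({1, 2, 3} : Set ℕ)) {A : Type u} {r : A → A → Prop}
    (h : IsNetIndex r) {f : A → P} {x : P} (hc : OConv1 r f x) : OConv i r f x := by
  obtain ⟨⟨a₀⟩, hr, ht, hd⟩ := h
  obtain ⟨xh, xl, h1, h2, h3⟩ := hc
  rcases hi with rfl | rfl | rfl
  · exact ⟨xh, xl, h1, h2, h3⟩
  · exact ⟨xh, xl, a₀, h1, h2, fun a _ => h3 a⟩
  · refine ⟨A, A, r, r, xh, xl,
      fun p => Classical.choose (hd p.1 p.2), ⟨⟨a₀⟩, hr, ht, hd⟩, ⟨⟨a₀⟩, hr, ht, hd⟩,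
      h1, h2, fun b c a ha => ?_⟩
    obtain ⟨hb, hcc⟩ := Classical.choose_spec (hd b c)
    exact ⟨le_trans (h1.1 _ _ (ht hb ha)) (h3 a).1, le_trans (h3 a).2 (h2.1 _ _ (ht hcc ha))⟩

lemma extract (i : ℕ) (hi : i ∈ ({1, 2, 3} : Set ℕ)) {A : Type u} {r : A → A → Prop}
    (h : IsNetIndex r) {f : A → P} {z : P} (hc : OConv i r f z) :
    ∃ (C : Type u) (xl : C → P), Nonempty C ∧ IsGLB (Set.range xl) z ∧
      ∀ c, ∃ a, f a ≤ xl c := by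
  obtain ⟨hne, hr, ht, hd⟩ := h
  rcases hi with rfl | rfl | rfl
  · obtain ⟨xh, xl, h1, h2, h3⟩ := hc
    exact ⟨A, xl, hne, h2.2, fun c => ⟨c, (h3 c).2⟩⟩
  · obtain ⟨xh, xl, a₀, h1, h2, h3⟩ := hc
    refine ⟨A, xl, hne, h2.2, fun c => ?_⟩
    obtain ⟨d, hd1, hd2⟩ := hd c a₀
    exact ⟨d, le_trans (h3 d hd2).2 (h2.1 _ _ hd1)⟩
  · obtain ⟨B, C, rB, rC, xh, xl, η, hB, hC, h1, h2, h3⟩ := hc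
    obtain ⟨⟨b⟩, _, _, _⟩ := hB
    exact ⟨C, xl, hC.1, h2.2, fun c => ⟨η (b, c), (h3 b c _ (hr _)).2⟩⟩

end NetHelpers
section Core
variable {X : Type v} [AddCommGroup X] [PartialOrder X] [IsOrderedAddMonoid X] [Module ℝ X]

lemma glb_shift {ι : Type u} (w : X) {D : ι → X} (h : IsGLB (Set.range D) 0) :
    IsLUB (Set.range fun p => w - D p) w ∧ IsGLB (Set.range fun p => w + D p) w := by
  have hD : ∀ p, (0 : X) ≤ D p := fun p => h.1 ⟨p, rfl⟩
  constructor
  · constructor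
    · rintro _ ⟨p, rfl⟩; simpa using hD p
    · intro m hm
      have : w - m ≤ 0 := h.2 fun y => by
        rintro ⟨p, rfl⟩
        have := hm ⟨p, rfl⟩
        exact sub_le_comm.1 (by simpa using this)
      exact sub_nonpos.1 this
  · constructor
    · rintro _ ⟨p, rfl⟩; simpa using hD p
    · intro m hm
      have : m - w ≤ 0 := by
        have hlb : m - w ∈ lowerBounds (Set.range D) := by
          rintro _ ⟨p, rfl⟩
          have := hm ⟨p, rfl⟩
          exact sub_le_iff_le_add'.2 this
        exact h.2 hlb
      exact sub_nonpos.1 this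

lemma infD (hs : ∀ (l : ℝ) (x : X), 0 ≤ l → 0 ≤ x → 0 ≤ l • x)
    (harch : ∀ x y : X, (∀ n : ℕ, n • x ≤ y) → x ≤ 0)
    {I : Type u} {J : Type w} {c : X} (hc : 0 ≤ c) {μ : ℝ} (hμ : 0 ≤ μ)
    {e : I → ℝ} (he : ∀ i, 0 ≤ e i) (hesmall : ∀ δ : ℝ, 0 < δ → ∃ i, e i ≤ δ)
    {k : J → X} (hk0 : ∀ j, 0 ≤ k j) (hkinf : ∀ z : X, (∀ j, z ≤ k j) → z ≤ 0) :
    IsGLB (Set.range (fun p : I × J => e p.1 • c + (e p.1 + μ) • k p.2)) 0 := by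
  constructor
  · rintro _ ⟨⟨i, j⟩, rfl⟩
    exact add_nonneg (hs _ _ (he i) hc) (hs _ _ (by linarith [he i]) (hk0 j))
  · intro z hz
    refine harch z c fun n => ?_
    match n with
    | 0 => simpa using hc
    | Nat.succ m => ?_
    have key : z ≤ ((m : ℝ) + 1)⁻¹ • c := by
      set δ : ℝ := ((m : ℝ) + 1)⁻¹ with hδ
      have hδpos : 0 < δ := by positivity
      obtain ⟨i, hi⟩ := hesmall δ hδpos
      have hbound : ∀ j, z - δ • c ≤ (δ + μ) • k j := by
        intro j
        have h1 : z ≤ e i • c + (e i + μ) • k j := hz ⟨(i, j), rfl⟩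
        have h2 : e i • c ≤ δ • c := hs_mono_left hs hi hc
        have h3 : (e i + μ) • k j ≤ (δ + μ) • k j :=
          hs_mono_left hs (by linarith) (hk0 j)
        have : z ≤ δ • c + (δ + μ) • k j := le_trans h1 (add_le_add h2 h3)
        exact sub_le_iff_le_add'.2 this
      have hpos : 0 < δ + μ := by linarith
      have : (δ + μ)⁻¹ • (z - δ • c) ≤ 0 := by
        refine hkinf _ fun j => ?_
        have := hs_mono_right hs (le_of_lt (by positivity : (0:ℝ) < (δ + μ)⁻¹)) (hbound j)
        rwa [smul_smul, inv_mul_cancel₀ hpos.ne', one_smul] at this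
      have := hs_mono_right hs hpos.le this
      rw [smul_smul, mul_inv_cancel₀ hpos.ne', one_smul, smul_zero] at this
      exact sub_nonpos.1 this
    have h2 := hs_mono_right hs (by positivity : (0:ℝ) ≤ (m : ℝ) + 1) key
    rw [smul_smul, mul_inv_cancel₀ (by positivity), one_smul] at h2
    have : ((m + 1 : ℕ) : ℝ) • z = (m + 1 : ℕ) • z := Nat.cast_smul_eq_nsmul ℝ _ z
    rw [← this]
    push_cast
    exact h2
end Core
section Core2
variable {X : Type v} [AddCommGroup X] [PartialOrder X] [IsOrderedAddMonoid X] [Module ℝ X]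

lemma est (hs : ∀ (l : ℝ) (x : X), 0 ≤ l → 0 ≤ x → 0 ≤ l • x)
    {lam s e : ℝ} {x y c k : X} (hse : |s - lam| ≤ e)
    (hy1 : -k ≤ y - x) (hy2 : y - x ≤ k) (hc1 : -c ≤ x) (hc2 : x ≤ c) :
    lam • x - (e • c + (e + |lam|) • k) ≤ s • y ∧
      s • y ≤ lam • x + (e • c + (e + |lam|) • k) := by
  obtain ⟨B1l, B1u⟩ := abs_bound hs hse hy1 hy2
  obtain ⟨B2l, B2u⟩ := abs_bound hs (le_refl |lam|) hy1 hy2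
  obtain ⟨B3l, B3u⟩ := abs_bound hs hse hc1 hc2
  have key : s • y - lam • x = (s - lam) • (y - x) + lam • (y - x) + (s - lam) • x := by
    module
  have hDeq : e • k + |lam| • k + e • c = e • c + (e + |lam|) • k := by module
  have hU : s • y - lam • x ≤ e • c + (e + |lam|) • k := by
    rw [key, ← hDeq]; exact add_le_add (add_le_add B1u B2u) B3u
  have hL : -(e • c + (e + |lam|) • k) ≤ s • y - lam • x := by
    have hneg : -(e • c + (e + |lam|) • k) = -(e • k) + -(|lam| • k) + -(e • c) := by
      module
    rw [key, hneg]; exact add_le_add (add_le_add B1l B2l) B3l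
  constructor
  · calc lam • x - (e • c + (e + |lam|) • k)
        = lam • x + -(e • c + (e + |lam|) • k) := by abel
      _ ≤ lam • x + (s • y - lam • x) := add_le_add_right hL _
      _ = s • y := by abel
  · calc s • y = lam • x + (s • y - lam • x) := by abel
      _ ≤ lam • x + (e • c + (e + |lam|) • k) := add_le_add_right hU _

lemma fwd_core (hs : ∀ (l : ℝ) (x : X), 0 ≤ l → 0 ≤ x → 0 ≤ l • x)
    (harch : ∀ x y : X, (∀ n : ℕ, n • x ≤ y) → x ≤ 0)
    {A : Type u} {B : Type w} {rA : A → A → Prop} {rB : B → B → Prop}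
    (hA : IsNetIndex rA) (hB : IsNetIndex rB)
    {p q : A → ℝ} {lam : ℝ} {u v : B → X} {x c : X}
    (hpm : ∀ a a', rA a a' → p a ≤ p a') (hpl : IsLUB (Set.range p) lam)
    (hqm : ∀ a a', rA a a' → q a' ≤ q a) (hqg : IsGLB (Set.range q) lam)
    (hum : ∀ b b', rB b b' → u b ≤ u b') (hul : IsLUB (Set.range u) x)
    (hvm : ∀ b b', rB b b' → v b' ≤ v b) (hvg : IsGLB (Set.range v) x)
    (hc1 : -c ≤ x) (hc2 : x ≤ c) (hc0 : 0 ≤ c) :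
    ∃ D : A × B → X,
      (∀ ab ab' : A × B, rA ab.1 ab'.1 → rB ab.2 ab'.2 → D ab' ≤ D ab) ∧
      IsGLB (Set.range D) 0 ∧
      (∀ (ab : A × B) (s : ℝ) (y : X),
        p ab.1 ≤ s → s ≤ q ab.1 → u ab.2 ≤ y → y ≤ v ab.2 →
        lam • x - D ab ≤ s • y ∧ s • y ≤ lam • x + D ab) := by
  have hple : ∀ a, p a ≤ lam := fun a => hpl.1 ⟨a, rfl⟩
  have hqge : ∀ a, lam ≤ q a := fun a => hqg.1 ⟨a, rfl⟩
  have hule : ∀ b, u b ≤ x := fun b => hul.1 ⟨b, rfl⟩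
  have hvge : ∀ b, x ≤ v b := fun b => hvg.1 ⟨b, rfl⟩
  set e : A → ℝ := fun a => q a - p a with he
  set k : B → X := fun b => v b - u b with hk
  have he0 : ∀ a, 0 ≤ e a := fun a => by
    have := hple a; have := hqge a; simp only [he]; linarith
  have hk0 : ∀ b, 0 ≤ k b := fun b => by
    have h1 := hule b; have h2 := hvge b
    exact sub_nonneg.2 (le_trans h1 h2)
  have hesmall : ∀ δ : ℝ, 0 < δ → ∃ a, e a ≤ δ := by
    intro δ hδ
    obtain ⟨y1, ⟨a1, rfl⟩, hy1, hy1'⟩ := hpl.exists_between (show lam - δ/2 < lam by linarith)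
    obtain ⟨y2, ⟨a2, rfl⟩, hy2, hy2'⟩ := hqg.exists_between (show lam < lam + δ/2 by linarith)
    obtain ⟨a3, ha1, ha2⟩ := hA.2.2.2 a1 a2
    refine ⟨a3, ?_⟩
    have := hpm a1 a3 ha1
    have := hqm a2 a3 ha2
    simp only [he]; linarith
  have hkinf : ∀ z : X, (∀ b, z ≤ k b) → z ≤ 0 := by
    intro z hz
    have step : ∀ b b', z + u b' ≤ v b := by
      intro b b'
      obtain ⟨b'', h1, h2⟩ := hB.2.2.2 b b'
      have hzb := hz b''
      have : z + u b'' ≤ v b'' := by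
        rw [hk] at hzb; exact add_le_of_le_sub_right hzb
      calc z + u b' ≤ z + u b'' := add_le_add_right (hum b' b'' h2) z
        _ ≤ v b'' := this
        _ ≤ v b := hvm b b'' h1
    have step2 : ∀ b', u b' ≤ x - z := by
      intro b'
      have : z + u b' ≤ x := hvg.2 fun y => by rintro ⟨b, rfl⟩; exact step b b'
      exact le_sub_left_of_add_le this
    have : x ≤ x - z := hul.2 fun y => by rintro ⟨b', rfl⟩; exact step2 b'
    have := sub_nonneg.2 this
    rw [sub_sub_cancel_left] at this
    simpa using neg_nonneg.1 this
  refine ⟨fun ab => e ab.1 • c + (e ab.1 + |lam|) • k ab.2, ?_, ?_, ?_⟩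
  · rintro ⟨a, b⟩ ⟨a', b'⟩ h1 h2
    have hee : e a' ≤ e a := by
      have h3 := hpm a a' h1; have h4 := hqm a a' h1
      simp only [he]; linarith
    have hkk : k b' ≤ k b := sub_le_sub (hvm b b' h2) (hum b b' h2)
    refine add_le_add (hs_mono_left hs hee hc0) ?_
    calc (e a' + |lam|) • k b' ≤ (e a' + |lam|) • k b :=
          hs_mono_right hs (by have := he0 a'; positivity) hkk
      _ ≤ (e a + |lam|) • k b := hs_mono_left hs (by linarith) (hk0 b)
  · exact infD hs harch hc0 (abs_nonneg lam) he0 hesmall hk0 hkinf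
  · rintro ⟨a, b⟩ s y h1 h2 h3 h4
    have hse : |s - lam| ≤ e a := by
      have h5 := hple a; have h6 := hqge a
      rw [abs_le]
      refine ⟨?_, ?_⟩ <;> (simp only [he] at *; linarith)
    have hy1 : -(k b) ≤ y - x := by
      rw [hk, neg_sub]; exact sub_le_sub h3 (hvge b)
    have hy2 : y - x ≤ k b := sub_le_sub h4 (hule b)
    exact est hs hse hy1 hy2 hc1 hc2
end Core2
section Fwd
variable {X : Type v} [AddCommGroup X] [PartialOrder X] [IsOrderedAddMonoid X] [Module ℝ X]

lemma bounds_of_dir {x a0 b0 : X} (ha : 0 ≤ a0) (hb : 0 ≤ b0) (hx : x = a0 - b0) :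
    -(a0 + b0) ≤ x ∧ x ≤ a0 + b0 ∧ 0 ≤ a0 + b0 := by
  refine ⟨?_, ?_, add_nonneg ha hb⟩
  · have h0 : (0:X) ≤ x - -(a0 + b0) := by
      have : x - -(a0 + b0) = a0 + a0 := by rw [hx]; abel
      rw [this]; exact add_nonneg ha ha
    exact sub_nonneg.1 h0
  · have h0 : (0:X) ≤ (a0 + b0) - x := by
      have : (a0 + b0) - x = b0 + b0 := by rw [hx]; abel
      rw [this]; exact add_nonneg hb hb
    exact sub_nonneg.1 h0

lemma fwd1 (hs : ∀ (l : ℝ) (x : X), 0 ≤ l → 0 ≤ x → 0 ≤ l • x)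
    (harch : ∀ x y : X, (∀ n : ℕ, n • x ≤ y) → x ≤ 0)
    (hdir : ∀ x : X, ∃ a b : X, 0 ≤ a ∧ 0 ≤ b ∧ x = a - b)
    {A B : Type u} {rA : A → A → Prop} {rB : B → B → Prop}
    (hA : IsNetIndex rA) (hB : IsNetIndex rB)
    {l : A → ℝ} {lam : ℝ} {g : B → X} {x : X}
    (hl : OConv1 rA l lam) (hg : OConv1 rB g x) :
    OConv1 (fun p q : A × B => rA p.1 q.1 ∧ rB p.2 q.2)
      (fun p : A × B => l p.1 • g p.2) (lam • x) := by
  obtain ⟨p, q, ⟨hpm, hpl⟩, ⟨hqm, hqg⟩, hsl⟩ := hl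
  obtain ⟨u, v, ⟨hum, hul⟩, ⟨hvm, hvg⟩, hsg⟩ := hg
  obtain ⟨a0, b0, ha, hb, hx⟩ := hdir x
  obtain ⟨hc1, hc2, hc0⟩ := bounds_of_dir ha hb hx
  obtain ⟨D, hDm, hDg, hDs⟩ := fwd_core hs harch hA hB hpm hpl hqm hqg hum hul hvm hvg
    hc1 hc2 hc0
  obtain ⟨hlub, hglb⟩ := glb_shift (lam • x) hDg
  refine ⟨fun ab => lam • x - D ab, fun ab => lam • x + D ab,
    ⟨fun ab ab' h => sub_le_sub_left (hDm ab ab' h.1 h.2) _, hlub⟩,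
    ⟨fun ab ab' h => add_le_add_right (hDm ab ab' h.1 h.2) _, hglb⟩, fun ab => ?_⟩
  exact hDs ab (l ab.1) (g ab.2) (hsl ab.1).1 (hsl ab.1).2 (hsg ab.2).1 (hsg ab.2).2

lemma fwd2 (hs : ∀ (l : ℝ) (x : X), 0 ≤ l → 0 ≤ x → 0 ≤ l • x)
    (harch : ∀ x y : X, (∀ n : ℕ, n • x ≤ y) → x ≤ 0)
    (hdir : ∀ x : X, ∃ a b : X, 0 ≤ a ∧ 0 ≤ b ∧ x = a - b)
    {A B : Type u} {rA : A → A → Prop} {rB : B → B → Prop}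
    (hA : IsNetIndex rA) (hB : IsNetIndex rB)
    {l : A → ℝ} {lam : ℝ} {g : B → X} {x : X}
    (hl : OConv2 rA l lam) (hg : OConv2 rB g x) :
    OConv2 (fun p q : A × B => rA p.1 q.1 ∧ rB p.2 q.2)
      (fun p : A × B => l p.1 • g p.2) (lam • x) := by
  obtain ⟨p, q, α₀, ⟨hpm, hpl⟩, ⟨hqm, hqg⟩, hsl⟩ := hl
  obtain ⟨u, v, β₀, ⟨hum, hul⟩, ⟨hvm, hvg⟩, hsg⟩ := hg
  obtain ⟨a0, b0, ha, hb, hx⟩ := hdir x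
  obtain ⟨hc1, hc2, hc0⟩ := bounds_of_dir ha hb hx
  obtain ⟨D, hDm, hDg, hDs⟩ := fwd_core hs harch hA hB hpm hpl hqm hqg hum hul hvm hvg
    hc1 hc2 hc0
  obtain ⟨hlub, hglb⟩ := glb_shift (lam • x) hDg
  refine ⟨fun ab => lam • x - D ab, fun ab => lam • x + D ab, (α₀, β₀),
    ⟨fun ab ab' h => sub_le_sub_left (hDm ab ab' h.1 h.2) _, hlub⟩,
    ⟨fun ab ab' h => add_le_add_right (hDm ab ab' h.1 h.2) _, hglb⟩, fun ab h => ?_⟩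
  exact hDs ab (l ab.1) (g ab.2) (hsl ab.1 h.1).1 (hsl ab.1 h.1).2
    (hsg ab.2 h.2).1 (hsg ab.2 h.2).2

lemma fwd3 (hs : ∀ (l : ℝ) (x : X), 0 ≤ l → 0 ≤ x → 0 ≤ l • x)
    (harch : ∀ x y : X, (∀ n : ℕ, n • x ≤ y) → x ≤ 0)
    (hdir : ∀ x : X, ∃ a b : X, 0 ≤ a ∧ 0 ≤ b ∧ x = a - b)
    {A B : Type u} {rA : A → A → Prop} {rB : B → B → Prop}
    (hA : IsNetIndex rA) (hB : IsNetIndex rB)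
    {l : A → ℝ} {lam : ℝ} {g : B → X} {x : X}
    (hl : OConv3 rA l lam) (hg : OConv3 rB g x) :
    OConv3 (fun p q : A × B => rA p.1 q.1 ∧ rB p.2 q.2)
      (fun p : A × B => l p.1 • g p.2) (lam • x) := by
  obtain ⟨B1, C1, rB1, rC1, p, q, η1, hB1, hC1, ⟨hpm, hpl⟩, ⟨hqm, hqg⟩, hsl⟩ := hl
  obtain ⟨B2, C2, rB2, rC2, u, v, η2, hB2, hC2, ⟨hum, hul⟩, ⟨hvm, hvg⟩, hsg⟩ := hg
  obtain ⟨a0, b0, ha, hb, hx⟩ := hdir x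
  obtain ⟨hc1, hc2, hc0⟩ := bounds_of_dir ha hb hx
  -- lifted nets on product index sets
  have hpl' : IsLUB (Set.range fun z : B1 × C1 => p z.1) lam := by
    constructor
    · rintro _ ⟨z, rfl⟩; exact hpl.1 ⟨z.1, rfl⟩
    · intro m hm
      refine hpl.2 fun y => ?_
      rintro ⟨b, rfl⟩
      obtain ⟨c⟩ := hC1.1
      exact hm ⟨(b, c), rfl⟩
  have hqg' : IsGLB (Set.range fun z : B1 × C1 => q z.2) lam := by
    constructor
    · rintro _ ⟨z, rfl⟩; exact hqg.1 ⟨z.2, rfl⟩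
    · intro m hm
      refine hqg.2 fun y => ?_
      rintro ⟨c, rfl⟩
      obtain ⟨b⟩ := hB1.1
      exact hm ⟨(b, c), rfl⟩
  have hul' : IsLUB (Set.range fun z : B2 × C2 => u z.1) x := by
    constructor
    · rintro _ ⟨z, rfl⟩; exact hul.1 ⟨z.1, rfl⟩
    · intro m hm
      refine hul.2 fun y => ?_
      rintro ⟨b, rfl⟩
      obtain ⟨c⟩ := hC2.1
      exact hm ⟨(b, c), rfl⟩
  have hvg' : IsGLB (Set.range fun z : B2 × C2 => v z.2) x := by
    constructor
    · rintro _ ⟨z, rfl⟩; exact hvg.1 ⟨z.2, rfl⟩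
    · intro m hm
      refine hvg.2 fun y => ?_
      rintro ⟨c, rfl⟩
      obtain ⟨b⟩ := hB2.1
      exact hm ⟨(b, c), rfl⟩
  obtain ⟨D, hDm, hDg, hDs⟩ := fwd_core (A := B1 × C1) (B := B2 × C2)
    (rA := fun z w => rB1 z.1 w.1 ∧ rC1 z.2 w.2)
    (rB := fun z w => rB2 z.1 w.1 ∧ rC2 z.2 w.2)
    hs harch (netindex_prod hB1 hC1) (netindex_prod hB2 hC2)
    (fun z w h => hpm z.1 w.1 h.1) hpl' (fun z w h => hqm z.2 w.2 h.2) hqg'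
    (fun z w h => hum z.1 w.1 h.1) hul' (fun z w h => hvm z.2 w.2 h.2) hvg'
    hc1 hc2 hc0
  obtain ⟨hlub, hglb⟩ := glb_shift (lam • x) hDg
  have hE : IsNetIndex (fun z w : (B1 × C1) × (B2 × C2) =>
      (rB1 z.1.1 w.1.1 ∧ rC1 z.1.2 w.1.2) ∧ (rB2 z.2.1 w.2.1 ∧ rC2 z.2.2 w.2.2)) :=
    netindex_prod (netindex_prod hB1 hC1) (netindex_prod hB2 hC2)
  refine ⟨(B1 × C1) × (B2 × C2), (B1 × C1) × (B2 × C2),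
    fun z w => (rB1 z.1.1 w.1.1 ∧ rC1 z.1.2 w.1.2) ∧ (rB2 z.2.1 w.2.1 ∧ rC2 z.2.2 w.2.2),
    fun z w => (rB1 z.1.1 w.1.1 ∧ rC1 z.1.2 w.1.2) ∧ (rB2 z.2.1 w.2.1 ∧ rC2 z.2.2 w.2.2),
    fun z => lam • x - D z, fun z => lam • x + D z,
    fun zw => ((hA.2.2.2 (η1 (zw.1.1.1, zw.1.1.2)) (η1 (zw.2.1.1, zw.2.1.2))).choose,
               (hB.2.2.2 (η2 (zw.1.2.1, zw.1.2.2)) (η2 (zw.2.2.1, zw.2.2.2))).choose),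
    hE, hE,
    ⟨fun z w h => sub_le_sub_left (hDm z w h.1 h.2) _, hlub⟩,
    ⟨fun z w h => add_le_add_right (hDm z w h.1 h.2) _, hglb⟩, ?_⟩
  rintro z w ⟨a, b⟩ ⟨haa, hbb⟩
  obtain ⟨hz1, hw1⟩ := (hA.2.2.2 (η1 (z.1.1, z.1.2)) (η1 (w.1.1, w.1.2))).choose_spec
  obtain ⟨hz2, hw2⟩ := (hB.2.2.2 (η2 (z.2.1, z.2.2)) (η2 (w.2.1, w.2.2))).choose_spec
  have hlz := hsl z.1.1 z.1.2 a (hA.2.2.1 hz1 haa)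
  have hlw := hsl w.1.1 w.1.2 a (hA.2.2.1 hw1 haa)
  have hgz := hsg z.2.1 z.2.2 b (hB.2.2.1 hz2 hbb)
  have hgw := hsg w.2.1 w.2.2 b (hB.2.2.1 hw2 hbb)
  constructor
  · exact (hDs z (l a) (g b) hlz.1 hlz.2 hgz.1 hgz.2).1
  · exact (hDs w (l a) (g b) hlw.1 hlw.2 hgw.1 hgw.2).2
end Fwd
section Bwd

lemma oconv1_const {P : Type v} [Preorder P] {A : Type u} {r : A → A → Prop}
    (h : IsNetIndex r) (x : P) : OConv1 r (fun _ => x) x := by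
  haveI : Nonempty A := h.1
  have hl : IsLUB (Set.range fun _ : A => x) x := by
    rw [Set.range_const]; exact isLUB_singleton
  have hg : IsGLB (Set.range fun _ : A => x) x := by
    rw [Set.range_const]; exact isGLB_singleton
  exact ⟨fun _ => x, fun _ => x, ⟨fun _ _ _ => le_rfl, hl⟩, ⟨fun _ _ _ => le_rfl, hg⟩,
    fun _ => ⟨le_rfl, le_rfl⟩⟩

lemma ulift_netindex : IsNetIndex (fun a b : ULift.{u} ℕ => a.down ≤ b.down) :=
  ⟨⟨⟨0⟩⟩, fun _ => le_refl _, fun _ _ _ h1 h2 => le_trans h1 h2,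
    fun a b => ⟨⟨max a.down b.down⟩, le_max_left _ _, le_max_right _ _⟩⟩

lemma oconv1_invnat : OConv1 (fun a b : ULift.{u} ℕ => a.down ≤ b.down)
    (fun n => ((n.down : ℝ) + 1)⁻¹) 0 := by
  have hmono : ∀ a b : ULift.{u} ℕ, a.down ≤ b.down →
      ((b.down : ℝ) + 1)⁻¹ ≤ ((a.down : ℝ) + 1)⁻¹ := by
    intro a b h
    exact inv_anti₀ (by positivity) (by exact_mod_cast Nat.succ_le_succ h)
  refine ⟨fun n => -(((n.down : ℝ) + 1)⁻¹), fun n => ((n.down : ℝ) + 1)⁻¹,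
    ⟨fun a b h => neg_le_neg (hmono a b h), ?_⟩, ⟨hmono, ?_⟩, fun n => ?_⟩
  · constructor
    · rintro _ ⟨n, rfl⟩
      have : (0:ℝ) < ((n.down : ℝ) + 1)⁻¹ := by positivity
      linarith
    · intro m hm
      by_contra hneg
      push_neg at hneg
      obtain ⟨n, hn⟩ := exists_nat_one_div_lt (show (0:ℝ) < -m by linarith)
      have := hm ⟨⟨n⟩, rfl⟩
      simp only at this
      rw [one_div] at hn
      push_cast at hn this
      linarith
  · constructor
    · rintro _ ⟨n, rfl⟩
      positivity
    · intro m hm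
      by_contra hneg
      push_neg at hneg
      obtain ⟨n, hn⟩ := exists_nat_one_div_lt hneg
      have := hm ⟨⟨n⟩, rfl⟩
      simp only at this
      rw [one_div] at hn
      push_cast at hn this
      linarith
  · constructor
    · have : (0:ℝ) < ((n.down : ℝ) + 1)⁻¹ := by positivity
      linarith
    · exact le_rfl
end Bwd
theorem archimedean_directed_iff_smul_oConv {X : Type v} [AddCommGroup X] [PartialOrder X] [IsOrderedAddMonoid X]
    [Module ℝ X] (hsmul : ∀ (l : ℝ) (x : X), 0 ≤ l → 0 ≤ x → 0 ≤ l • x)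
    (i : ℕ) (hi : i ∈ ({1, 2, 3} : Set ℕ)) :
    ((∀ x y : X, (∀ n : ℕ, n • x ≤ y) → x ≤ 0) ∧
      (∀ x : X, ∃ a b : X, 0 ≤ a ∧ 0 ≤ b ∧ x = a - b)) ↔
    (∀ (A B : Type u) (rA : A → A → Prop) (rB : B → B → Prop),
      IsNetIndex rA → IsNetIndex rB →
      ∀ (l : A → ℝ) (lam : ℝ) (g : B → X) (x : X),
        OConv i rA l lam → OConv i rB g x →
        OConv i (fun p q : A × B => rA p.1 q.1 ∧ rB p.2 q.2)
          (fun p : A × B => l p.1 • g p.2) (lam • x)) := by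
  constructor
  · rintro ⟨harch, hdir⟩ A B rA rB hA hB l lam g x hl hg
    rcases hi with rfl | rfl | rfl
    · exact fwd1 hsmul harch hdir hA hB hl hg
    · exact fwd2 hsmul harch hdir hA hB hl hg
    · exact fwd3 hsmul harch hdir hA hB hl hg
  · intro H
    have key : ∀ y : X, ∃ (C : Type u) (xl : C → X), Nonempty C ∧
        IsGLB (Set.range xl) 0 ∧
        ∀ c, ∃ m : ℕ, ((m : ℝ) + 1)⁻¹ • y ≤ xl c := by
      intro y
      have hNI := ulift_netindex.{u}
      have hl : OConv i (fun a b : ULift.{u} ℕ => a.down ≤ b.down)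
          (fun n => ((n.down : ℝ) + 1)⁻¹) 0 := oconv1_to i hi hNI oconv1_invnat
      have hg : OConv i (fun a b : ULift.{u} ℕ => a.down ≤ b.down)
          (fun _ => y) y := oconv1_to i hi hNI (oconv1_const hNI y)
      have hc := H _ _ _ _ hNI hNI _ 0 _ y hl hg
      rw [zero_smul] at hc
      obtain ⟨C, xl, hne, hglb, hcof⟩ := extract i hi (netindex_prod hNI hNI) hc
      refine ⟨C, xl, hne, hglb, fun c => ?_⟩
      obtain ⟨a, ha⟩ := hcof c
      exact ⟨a.1.down, ha⟩
    constructor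
    · intro x y hxy
      obtain ⟨C, xl, hne, hglb, hcof⟩ := key y
      refine hglb.2 ?_
      rintro _ ⟨c, rfl⟩
      obtain ⟨m, hm⟩ := hcof c
      refine le_trans ?_ hm
      have hm1 : ((m : ℝ) + 1) • x ≤ y := by
        have h1 := hxy (m + 1)
        rw [← Nat.cast_smul_eq_nsmul ℝ] at h1
        push_cast at h1
        exact h1
      have h2 := hs_mono_right hsmul
        (by positivity : (0:ℝ) ≤ ((m : ℝ) + 1)⁻¹) hm1
      rwa [smul_smul, inv_mul_cancel₀ (by positivity), one_smul] at h2
    · intro x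
      obtain ⟨C, xl, ⟨c0⟩, hglb, hcof⟩ := key x
      obtain ⟨m, hm⟩ := hcof c0
      have hu : (0 : X) ≤ xl c0 := hglb.1 ⟨c0, rfl⟩
      have hx : x ≤ ((m : ℝ) + 1) • xl c0 := by
        have h2 := hs_mono_right hsmul (by positivity : (0:ℝ) ≤ (m : ℝ) + 1) hm
        rwa [smul_smul, mul_inv_cancel₀ (by positivity), one_smul] at h2
      exact ⟨((m : ℝ) + 1) • xl c0, ((m : ℝ) + 1) • xl c0 - x,
        hsmul _ _ (by positivity) hu, sub_nonneg.2 hx, (sub_sub_cancel _ _).symm⟩
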